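/- Let ℋ be a Hilbert space, f ∈ ℋ, and A ≥ 0 a self-adjoint operator on ℋ. Then for any c > 0 and ε₀ > 0 there exists L > 0 such that the operator inequality f(f, ·) − L(A + ε₀)⁻¹ ≤ c holds, i.e. |(f, g)|² − L (g, (A + ε₀)⁻¹ g) ≤ c‖g‖² for all g ∈ ℋ. -/

import Mathlib

open scoped InnerProductSpace

noncomputable section

/-- Cauchy–Schwarz for a positive symmetric operator. -/
lemma pos_op_cauchy_schwarz {ℋ : Type*} [NormedAddCommGroup ℋ] [InnerProductSpace ℂ ℋ]
    (R : ℋ →L[ℂ] ℋ) (hsymm : ∀ x y : ℋ, ⟪R x, y⟫_ℂ = ⟪x, R y⟫_ℂ)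
    (hpos : ∀ x : ℋ, 0 ≤ (⟪x, R x⟫_ℂ).re) (x y : ℋ) :
    ‖⟪x, R y⟫_ℂ‖ ^ 2 ≤ (⟪x, R x⟫_ℂ).re * (⟪y, R y⟫_ℂ).re := by
  let c : PreInnerProductSpace.Core ℂ ℋ :=
  { inner := fun a b => ⟪a, R b⟫_ℂ
    conj_inner_symm := by
      intro a b
      try simp only
      rw [inner_conj_symm, hsymm]
    re_inner_nonneg := hpos
    add_left := by intro a b z; simp [inner_add_left]
    smul_left := by intro a b r; simp [inner_smul_left, mul_comm] }
  have h := @InnerProductSpace.Core.inner_mul_inner_self_le ℂ ℋ _ _ _ c x y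
  have hxy : (@inner ℂ ℋ c.toInner x y) = ⟪x, R y⟫_ℂ := rfl
  have hyx : (@inner ℂ ℋ c.toInner y x) = ⟪y, R x⟫_ℂ := rfl
  rw [hxy, hyx] at h
  have hn : ‖⟪y, R x⟫_ℂ‖ = ‖⟪x, R y⟫_ℂ‖ := by
    rw [← hsymm, norm_inner_symm]
  rw [hn] at h
  calc ‖⟪x, R y⟫_ℂ‖ ^ 2 = ‖⟪x, R y⟫_ℂ‖ * ‖⟪x, R y⟫_ℂ‖ := sq (‖⟪x, R y⟫_ℂ‖) ▸ by ring
    _ ≤ _ := h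

/-- **Lemma 17 of the paper (Lemma about shrinking a rank-one perturbation below the
resolvent).**  Let `ℋ` be a Hilbert space, `f ∈ ℋ`, and let `A ≥ 0` be a (possibly unbounded)
nonnegative self-adjoint operator on `ℋ`; for `ε₀ > 0` its resolvent `R = (A + ε₀)⁻¹` is the
bounded self-adjoint operator characterized by the two inversion identities below.  Then for
any `c > 0` and `ε₀ > 0` there exists `L > 0` such that the operator inequality
`f (f, ·) - L (A + ε₀)⁻¹ ≤ c` holds, i.e.
`|(f, g)|² - L (g, (A + ε₀)⁻¹ g) ≤ c ‖g‖²` for all `g ∈ ℋ`. -/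
theorem rank_one_dominated_by_resolvent
    {ℋ : Type*} [NormedAddCommGroup ℋ] [InnerProductSpace ℂ ℋ] [CompleteSpace ℋ]
    (A : ℋ →ₗ.[ℂ] ℋ)
    (hdense : Dense (A.domain : Set ℋ))
    (hsym : ∀ x y : A.domain, ⟪(A x : ℋ), (y : ℋ)⟫_ℂ = ⟪(x : ℋ), (A y : ℋ)⟫_ℂ)
    (hpos : ∀ x : A.domain, 0 ≤ (⟪(x : ℋ), (A x : ℋ)⟫_ℂ).re)
    (f : ℋ) (c ε₀ : ℝ) (hc : 0 < c) (hε₀ : 0 < ε₀)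
    (R : ℋ →L[ℂ] ℋ)
    (hRsa : IsSelfAdjoint R)
    (hR1 : ∀ y : ℋ, ∃ hy : R y ∈ A.domain, (A ⟨R y, hy⟩ : ℋ) + ε₀ • R y = y)
    (hR2 : ∀ x : A.domain, R ((A x : ℋ) + ε₀ • (x : ℋ)) = (x : ℋ)) :
    ∃ L : ℝ, 0 < L ∧
      ∀ g : ℋ, ‖⟪f, g⟫_ℂ‖ ^ 2 - L * (⟪g, R g⟫_ℂ).re ≤ c * ‖g‖ ^ 2 := by
  -- R is symmetric
  have hsymmR : ∀ x y : ℋ, ⟪R x, y⟫_ℂ = ⟪x, R y⟫_ℂ := fun x y =>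
    (ContinuousLinearMap.isSelfAdjoint_iff_isSymmetric.mp hRsa) x y
  -- R is nonnegative
  have hRpos : ∀ g : ℋ, 0 ≤ (⟪g, R g⟫_ℂ).re := by
    intro g
    obtain ⟨hy, hgy⟩ := hR1 g
    have hg : ⟪g, R g⟫_ℂ = ⟪(A ⟨R g, hy⟩ : ℋ) + ε₀ • R g, R g⟫_ℂ := by rw [hgy]
    have hsm : ⟪ε₀ • R g, R g⟫_ℂ = (ε₀ : ℂ) * ⟪R g, R g⟫_ℂ := by
      rw [show (ε₀ • R g : ℋ) = (ε₀ : ℂ) • R g from (RCLike.real_smul_eq_coe_smul (K := ℂ) ε₀ (R g)),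
        inner_smul_left]
      simp
    rw [hg, inner_add_left, hsm]
    have h1 := hpos ⟨R g, hy⟩
    have h2 : (⟪(A ⟨R g, hy⟩ : ℋ), R g⟫_ℂ).re = (⟪(R g : ℋ), (A ⟨R g, hy⟩ : ℋ)⟫_ℂ).re := by
      rw [← inner_conj_symm, Complex.conj_re]
    have h3 : (⟪R g, R g⟫_ℂ).re = ‖R g‖ ^ 2 := by
      simpa using inner_self_eq_norm_sq (𝕜 := ℂ) (R g)
    have h4 : (0:ℝ) ≤ ‖R g‖ ^ 2 := sq_nonneg _
    simp only [Complex.add_re, Complex.real_smul, Complex.mul_re, Complex.ofReal_re,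
      Complex.ofReal_im]
    nlinarith [h1, h2, h3]
  -- pick u in the domain close to f
  have hf : f ∈ closure (A.domain : Set ℋ) := hdense f
  rw [Metric.mem_closure_iff] at hf
  obtain ⟨u, hu, hdist⟩ := hf (Real.sqrt (c / 2)) (Real.sqrt_pos.mpr (by linarith))
  have hclose : ‖f - u‖ ^ 2 ≤ c / 2 := by
    have h1 : ‖f - u‖ = dist f u := (dist_eq_norm f u).symm
    have h2 : Real.sqrt (c / 2) ^ 2 = c / 2 := Real.sq_sqrt (by linarith)
    nlinarith [dist_nonneg (x := f) (y := u), hdist]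
  set uu : A.domain := ⟨u, hu⟩ with huu
  set v : ℋ := (A uu : ℋ) + ε₀ • (u : ℋ) with hv
  have hRv : R v = u := hR2 uu
  refine ⟨2 * (⟪v, R v⟫_ℂ).re + 1, by nlinarith [hRpos v], ?_⟩
  intro g
  -- Cauchy–Schwarz through R
  have key : ‖⟪u, g⟫_ℂ‖ ^ 2 ≤ (⟪v, R v⟫_ℂ).re * (⟪g, R g⟫_ℂ).re := by
    have h1 : ⟪u, g⟫_ℂ = ⟪v, R g⟫_ℂ := by rw [← hRv, hsymmR]
    rw [h1]
    exact pos_op_cauchy_schwarz R hsymmR hRpos v g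
  have split : ‖⟪f, g⟫_ℂ‖ ^ 2 ≤ 2 * ‖⟪f - u, g⟫_ℂ‖ ^ 2 + 2 * ‖⟪u, g⟫_ℂ‖ ^ 2 := by
    have h1 : ⟪f, g⟫_ℂ = ⟪f - u, g⟫_ℂ + ⟪u, g⟫_ℂ := by rw [inner_sub_left]; ring
    have h2 : ‖⟪f, g⟫_ℂ‖ ≤ ‖⟪f - u, g⟫_ℂ‖ + ‖⟪u, g⟫_ℂ‖ := h1 ▸ norm_add_le _ _
    have h3 : ‖⟪f, g⟫_ℂ‖ ^ 2 ≤ (‖⟪f - u, g⟫_ℂ‖ + ‖⟪u, g⟫_ℂ‖) ^ 2 :=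
      pow_le_pow_left₀ (norm_nonneg _) h2 2
    nlinarith [sq_nonneg (‖⟪f - u, g⟫_ℂ‖ - ‖⟪u, g⟫_ℂ‖)]
  have cs : ‖⟪f - u, g⟫_ℂ‖ ≤ ‖f - u‖ * ‖g‖ := norm_inner_le_norm _ _
  nlinarith [hRpos g, norm_nonneg g, norm_nonneg (⟪f - u, g⟫_ℂ), sq_nonneg (‖f - u‖ * ‖g‖),
    mul_le_mul_of_nonneg_right hclose (sq_nonneg ‖g‖)]
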